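/- Fix nonnegative integers a,b,c with c < a ≤ b+c. Define m(x,y) for nonnegative integers x,y as the number of triples (d,e,f) of integers with 0≤d≤c, 0≤e≤-a+b+c, 0≤f, satisfying d-e+f = x-(-a+b+c) and e+f = y. Then m(x,y) ≠ 0 if and only if a-b-2c ≤ -x+y ≤ -a+b+c, x+y ≥ -a+b+c, and (if c=0) x+y ≡ a+b (mod 2). When m(x,y)≠0, with δ = 0 if x+y ≡ -a+b+c (mod 2) and δ = 1 otherwise: if y ≥ -a+b+c then m(x,y) = min(⌊(c-δ)/2⌋, (-a+b+c+x-y-δ)/2, ⌊(-a+b+2c-x+y)/2⌋, -a+b+c) + 1; if y < -a+b+c then m(x,y) = min(⌊(c-δ)/2⌋, (a-b-c+x+y-δ)/2, ⌊(-a+b+2c-x+y)/2⌋, y) + 1. -/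
import Mathlib


/-- `mcount' a b c x y` is the number of integer triples `(d,e,f)` with
`0 ≤ d ≤ c`, `0 ≤ e ≤ −a+b+c`, `0 ≤ f`, `d − e + f = x − (−a+b+c)`, `e + f = y`. -/
noncomputable def mcount' (a b c x y : ℕ) : ℕ :=
  Set.ncard {t : ℤ × ℤ × ℤ |
    0 ≤ t.1 ∧ t.1 ≤ (c : ℤ) ∧ 0 ≤ t.2.1 ∧ t.2.1 ≤ -(a : ℤ) + b + c ∧ 0 ≤ t.2.2 ∧
    t.1 - t.2.1 + t.2.2 = (x : ℤ) - (-(a : ℤ) + b + c) ∧ t.2.1 + t.2.2 = (y : ℤ)}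

lemma mcount'_eq (a b c x y : ℕ) :
    (mcount' a b c x y : ℤ) =
      (min (min (-(a:ℤ)+b+c) (y:ℤ)) ((-(a:ℤ)+b+c+y-x+c)/2) + 1
        - max 0 ((-(a:ℤ)+b+c+y-x+1)/2)).toNat := by
  have hinj : Function.Injective
      (fun e : ℤ => ((x:ℤ) - (-(a:ℤ)+b+c) - y + 2*e, e, (y:ℤ) - e)) := by
    intro e₁ e₂ h
    simpa using congrArg (fun t : ℤ × ℤ × ℤ => t.2.1) h
  have hset : {t : ℤ × ℤ × ℤ |
      0 ≤ t.1 ∧ t.1 ≤ (c : ℤ) ∧ 0 ≤ t.2.1 ∧ t.2.1 ≤ -(a : ℤ) + b + c ∧ 0 ≤ t.2.2 ∧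
      t.1 - t.2.1 + t.2.2 = (x : ℤ) - (-(a : ℤ) + b + c) ∧ t.2.1 + t.2.2 = (y : ℤ)} =
      (fun e : ℤ => ((x:ℤ) - (-(a:ℤ)+b+c) - y + 2*e, e, (y:ℤ) - e)) ''
        Set.Icc (max 0 ((-(a:ℤ)+b+c+y-x+1)/2))
          (min (min (-(a:ℤ)+b+c) (y:ℤ)) ((-(a:ℤ)+b+c+y-x+c)/2)) := by
    ext ⟨d, e, f⟩
    simp only [Set.mem_setOf_eq, Set.mem_image, Set.mem_Icc, Prod.mk.injEq]
    constructor
    · rintro ⟨h1, h2, h3, h4, h5, h6, h7⟩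
      exact ⟨e, ⟨by omega, by omega⟩, by omega, rfl, by omega⟩
    · rintro ⟨e', ⟨hl, hu⟩, hd, he, hf⟩
      subst he
      constructor <;> [omega; constructor] <;> [omega; refine ⟨by omega, by omega, by omega, by omega, by omega⟩]
  have : mcount' a b c x y =
      (Finset.Icc (max 0 ((-(a:ℤ)+b+c+y-x+1)/2))
        (min (min (-(a:ℤ)+b+c) (y:ℤ)) ((-(a:ℤ)+b+c+y-x+c)/2))).card := by
    rw [mcount', hset, Set.ncard_image_of_injective _ hinj, ← Finset.coe_Icc,
      Set.ncard_coe_finset]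
  rw [this, Int.card_Icc]

set_option maxHeartbeats 2000000

/-- Nonvanishing criterion and closed formula for `mcount'` in the regime `c < a ≤ b+c`. -/
theorem mcount'_formula_c_lt_a (a b c x y : ℕ) (h1 : c < a) (h2 : a ≤ b + c) :
    (mcount' a b c x y ≠ 0 ↔
      ((a : ℤ) - b - 2 * c ≤ -(x : ℤ) + y ∧ -(x : ℤ) + y ≤ -(a : ℤ) + b + c ∧
        -(a : ℤ) + b + c ≤ (x : ℤ) + y ∧
        (c = 0 → ((x : ℤ) + y) % 2 = ((a : ℤ) + b) % 2))) ∧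
    (mcount' a b c x y ≠ 0 →
      ∀ δ : ℤ, (δ = if ((x : ℤ) + y) % 2 = (-(a : ℤ) + b + c) % 2 then 0 else 1) →
      ((-(a : ℤ) + b + c ≤ (y : ℤ) → (mcount' a b c x y : ℤ) =
          min (min (((c : ℤ) - δ) / 2) ((-(a : ℤ) + b + c + x - y - δ) / 2))
            (min ((-(a : ℤ) + b + 2 * c - x + y) / 2) (-(a : ℤ) + b + c)) + 1) ∧
       ((y : ℤ) < -(a : ℤ) + b + c → (mcount' a b c x y : ℤ) =
          min (min (((c : ℤ) - δ) / 2) (((a : ℤ) - b - c + x + y - δ) / 2))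
            (min ((-(a : ℤ) + b + 2 * c - x + y) / 2) (y : ℤ)) + 1))) := by
  have key := mcount'_eq a b c x y
  obtain ⟨n, hn⟩ : ∃ n, mcount' a b c x y = n := ⟨_, rfl⟩
  rw [hn] at key ⊢
  have hne : n ≠ 0 ↔ (n : ℤ) ≠ 0 := by exact_mod_cast (Int.natCast_ne_zero).symm
  constructor
  · rw [hne]
    constructor
    · intro h; refine ⟨by omega, by omega, by omega, fun hc => by omega⟩
    · intro h; omega
  · intro h0 δ hδ
    rw [hne] at h0
    by_cases hp : ((x : ℤ) + y) % 2 = (-(a : ℤ) + b + c) % 2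
    · rw [if_pos hp] at hδ; subst hδ
      exact ⟨fun hy => by omega, fun hy => by omega⟩
    · rw [if_neg hp] at hδ; subst hδ
      exact ⟨fun hy => by omega, fun hy => by omega⟩
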